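/- Let x(t) be a continuous-time Markov process and t_1 < t_2 < ... < t_{2^k+1} arbitrary times. With f(i) = max{j ∈ ℕ : (i−1) mod 2^j = 0}, the finite-dimensional joint density factorizes as p(x(t_1), ..., x(t_{2^k+1})) = p(x(t_1)) · p(x(t_{2^k+1}) | x(t_1)) · ∏_{i=2}^{2^k} p(x(t_i) | x(t_{i−f(i)}), x(t_{i+f(i)})). -/

import Mathlib

open Finset

/-- The gap `2^(f i)` where `f i = max {j : (i-1) mod 2^j = 0}` is the largest power of two
dividing `i - 1`; the point `x(t_i)` is conditioned on `x(t_{i - 2^(f i)})` and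
`x(t_{i + 2^(f i)})`. -/
def dyadicGap (i : ℕ) : ℕ := 2 ^ ((i - 1).factorization 2)



lemma gap_dvd (i : ℕ) : dyadicGap i ∣ (i - 1) := Nat.ordProj_dvd _ 2

lemma gap_le {i : ℕ} (hi : 2 ≤ i) : dyadicGap i ≤ i - 1 :=
  Nat.le_of_dvd (by omega) (gap_dvd i)

lemma gap_mid (k : ℕ) : dyadicGap (2 ^ k + 1) = 2 ^ k := by
  unfold dyadicGap
  simp [Nat.Prime.factorization_pow Nat.prime_two]

lemma gap_shift {k j : ℕ} (h2 : 2 ≤ j) (hjN : j ≤ 2 ^ k) :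
    dyadicGap (j + 2 ^ k) = dyadicGap j := by
  unfold dyadicGap
  have ha : j + 2 ^ k - 1 = (j - 1) + 2 ^ k := by omega
  rw [ha]
  set a := j - 1 with hadef
  have ha0 : a ≠ 0 := by omega
  have haN : a < 2 ^ k := by omega
  have hne : a + 2 ^ k ≠ 0 := by positivity
  congr 1
  apply le_antisymm
  · -- (a + 2^k).factorization 2 ≤ a.factorization 2
    set m := (a + 2 ^ k).factorization 2 with hm
    have hdvd : 2 ^ m ∣ a + 2 ^ k := Nat.ordProj_dvd _ 2
    have hmk : m ≤ k := by
      by_contra hc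
      have : 2 ^ (k + 1) ∣ a + 2 ^ k := dvd_trans (pow_dvd_pow 2 (by omega)) hdvd
      have := Nat.le_of_dvd (by positivity) this
      have : 2 ^ (k + 1) = 2 ^ k + 2 ^ k := by ring
      omega
    have hda : 2 ^ m ∣ a := (Nat.dvd_add_right (dvd_trans (pow_dvd_pow 2 hmk) dvd_rfl)).mp
      (by rwa [Nat.add_comm] at hdvd)
    exact (Nat.Prime.pow_dvd_iff_le_factorization Nat.prime_two ha0).mp hda
  · set m := a.factorization 2 with hm
    have hda : 2 ^ m ∣ a := Nat.ordProj_dvd _ 2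
    have hmk : m < k := by
      have h1 : 2 ^ m ≤ a := Nat.le_of_dvd (by omega) hda
      have := lt_of_le_of_lt h1 haN
      exact (Nat.pow_lt_pow_iff_right one_lt_two).mp this
    have : 2 ^ m ∣ a + 2 ^ k := Dvd.dvd.add hda (pow_dvd_pow 2 hmk.le)
    exact (Nat.Prime.pow_dvd_iff_le_factorization Nat.prime_two hne).mp this

lemma mul_shuffle (a b c L R : ℝ) (ha : a ≠ 0) :
    a * (L * (b * c / a) * R) = b * L * (c * R) := by
  field_simp

lemma key {E : Type*} (tr : ℝ → ℝ → E → E → ℝ) (hpos : ∀ s1 s2 u v, 0 < tr s1 s2 u v) :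
    ∀ (k : ℕ) (t : ℕ → ℝ) (x : ℕ → E),
      tr (t 1) (t (2 ^ k + 1)) (x 1) (x (2 ^ k + 1)) *
        ∏ i ∈ Icc 2 (2 ^ k),
          tr (t (i - dyadicGap i)) (t i) (x (i - dyadicGap i)) (x i) *
            tr (t i) (t (i + dyadicGap i)) (x i) (x (i + dyadicGap i)) /
            tr (t (i - dyadicGap i)) (t (i + dyadicGap i)) (x (i - dyadicGap i)) (x (i + dyadicGap i))
      = ∏ i ∈ Icc 1 (2 ^ k), tr (t i) (t (i + 1)) (x i) (x (i + 1)) := by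
  intro k
  induction k with
  | zero => intro t x; simp
  | succ k ih =>
    intro t x
    set N := 2 ^ k with hN
    have hN1 : 1 ≤ N := Nat.one_le_two_pow
    have h2N : 2 ^ (k + 1) = N + N := by rw [pow_succ]; ring
    rw [h2N]
    set t' : ℕ → ℝ := fun i => t (i + N) with ht'
    set x' : ℕ → E := fun i => x (i + N) with hx'
    have hgmid : dyadicGap (N + 1) = N := by rw [hN]; exact gap_mid k
    have hsplit : (∏ i ∈ Icc 2 (N + N),
          (tr (t (i - dyadicGap i)) (t i) (x (i - dyadicGap i)) (x i) *
            tr (t i) (t (i + dyadicGap i)) (x i) (x (i + dyadicGap i)) /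
            tr (t (i - dyadicGap i)) (t (i + dyadicGap i)) (x (i - dyadicGap i))
              (x (i + dyadicGap i)))) =
        (∏ i ∈ Icc 2 N,
          (tr (t (i - dyadicGap i)) (t i) (x (i - dyadicGap i)) (x i) *
            tr (t i) (t (i + dyadicGap i)) (x i) (x (i + dyadicGap i)) /
            tr (t (i - dyadicGap i)) (t (i + dyadicGap i)) (x (i - dyadicGap i))
              (x (i + dyadicGap i)))) *
          (tr (t 1) (t (N + 1)) (x 1) (x (N + 1)) *
            tr (t (N + 1)) (t (N + N + 1)) (x (N + 1)) (x (N + N + 1)) /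
            tr (t 1) (t (N + N + 1)) (x 1) (x (N + N + 1))) *
          (∏ i ∈ Ioc (N + 1) (N + N),
            (tr (t (i - dyadicGap i)) (t i) (x (i - dyadicGap i)) (x i) *
              tr (t i) (t (i + dyadicGap i)) (x i) (x (i + dyadicGap i)) /
              tr (t (i - dyadicGap i)) (t (i + dyadicGap i)) (x (i - dyadicGap i))
                (x (i + dyadicGap i)))) := by
      rw [show (2:ℕ) = 1 + 1 from rfl, Finset.Icc_add_one_left_eq_Ioc, Finset.Icc_add_one_left_eq_Ioc,
        ← prod_Ioc_consecutive _ (by omega : 1 ≤ N + 1) (by omega : N + 1 ≤ N + N),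
        ← prod_Ioc_consecutive _ (by omega : 1 ≤ N) (by omega : N ≤ N + 1),
        Nat.Ioc_succ_singleton, prod_singleton]
      rw [hgmid, show N + 1 - N = 1 from by omega, show N + 1 + N = N + N + 1 from by omega]
    have hre : (∏ i ∈ Ioc (N + 1) (N + N),
          (tr (t (i - dyadicGap i)) (t i) (x (i - dyadicGap i)) (x i) *
            tr (t i) (t (i + dyadicGap i)) (x i) (x (i + dyadicGap i)) /
            tr (t (i - dyadicGap i)) (t (i + dyadicGap i)) (x (i - dyadicGap i))
              (x (i + dyadicGap i)))) =
        ∏ j ∈ Icc 2 N,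
          (tr (t' (j - dyadicGap j)) (t' j) (x' (j - dyadicGap j)) (x' j) *
            tr (t' j) (t' (j + dyadicGap j)) (x' j) (x' (j + dyadicGap j)) /
            tr (t' (j - dyadicGap j)) (t' (j + dyadicGap j)) (x' (j - dyadicGap j))
              (x' (j + dyadicGap j))) := by
      rw [show Ioc (N + 1) (N + N) = (Ioc 1 N).map (addRightEmbedding N) from by
        rw [Finset.map_add_right_Ioc]; congr 1; omega]
      rw [Finset.prod_map, show Finset.Ioc 1 N = Finset.Icc 2 N from (Finset.Icc_add_one_left_eq_Ioc 1 N).symm]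
      apply Finset.prod_congr rfl
      intro j hj
      simp only [mem_Icc] at hj
      have hg : dyadicGap (j + N) = dyadicGap j := by
        rw [hN]; exact gap_shift hj.1 (hN ▸ hj.2)
      have hgle : dyadicGap j ≤ j - 1 := gap_le hj.1
      simp only [addRightEmbedding_apply, hg, ht', hx']
      rw [show j + N - dyadicGap j = (j - dyadicGap j) + N from by omega,
          show j + N + dyadicGap j = (j + dyadicGap j) + N from by omega]
    have hrhs : (∏ i ∈ Icc 1 (N + N), tr (t i) (t (i + 1)) (x i) (x (i + 1))) =
        (∏ i ∈ Icc 1 N, tr (t i) (t (i + 1)) (x i) (x (i + 1))) *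
          ∏ j ∈ Icc 1 N, tr (t (j + N)) (t (j + 1 + N)) (x (j + N)) (x (j + 1 + N)) := by
      rw [show (1:ℕ) = 0 + 1 from rfl, Finset.Icc_add_one_left_eq_Ioc, Finset.Icc_add_one_left_eq_Ioc,
        ← prod_Ioc_consecutive _ (by omega : 0 ≤ N) (by omega : N ≤ N + N)]
      congr 1
      rw [show Ioc N (N + N) = (Ioc 0 N).map (addRightEmbedding N) from by
        rw [Finset.map_add_right_Ioc]; congr 1; omega]
      rw [Finset.prod_map]
      apply Finset.prod_congr rfl
      intro j hj
      simp only [addRightEmbedding_apply]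
      rw [show j + N + 1 = j + 1 + N from by omega]
    have ih1 := ih t x
    have ih2 := ih t' x'
    simp only [ht', hx'] at ih2
    rw [show 1 + N = N + 1 from by omega, show N + 1 + N = N + N + 1 from by omega] at ih2
    simp only [ht', hx'] at hre
    rw [hsplit, hre, hrhs, ← ih1, ← ih2]
    exact mul_shuffle _ _ _ _ _ (hpos (t 1) (t (N + N + 1)) (x 1) (x (N + N + 1))).ne'

/-- Let `x(t)` be a continuous-time Markov process with positive transition
densities `tr s t u v` (density of `x(t) = v` given `x(s) = u`), and let
`t_1 < t_2 < … < t_{2^k+1}` be arbitrary times.  The finite-dimensional joint density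
factorizes as
`p(x(t_1), …, x(t_{2^k+1})) = p(x(t_1)) · p(x(t_{2^k+1}) ∣ x(t_1)) ·
   ∏_{i=2}^{2^k} p(x(t_i) ∣ x(t_{i−f(i)}), x(t_{i+f(i)}))`. -/
theorem stmt_17 {E : Type*} (k : ℕ) (t : ℕ → ℝ) (hmono : StrictMono t)
    (p : (ℕ → E) → ℝ)              -- joint density of (x(t_1), …, x(t_{2^k+1}))
    (p1 : E → ℝ)                   -- density of x(t_1)
    (tr : ℝ → ℝ → E → E → ℝ)       -- tr s t u v = transition density of x(t) = v given x(s) = u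
    (cond : ℝ → ℝ → ℝ → E → E → E → ℝ) -- cond s1 s2 s3 u v w = p(x(s2) = v ∣ x(s1) = u, x(s3) = w)
    (hpos : ∀ s1 s2 u v, 0 < tr s1 s2 u v)
    (hp1pos : ∀ u, 0 < p1 u)
    -- Markov property: the joint density is the product of one-step transition densities
    (hMarkov : ∀ x, p x =
      p1 (x 1) * ∏ i ∈ Icc 1 (2 ^ k), tr (t i) (t (i + 1)) (x i) (x (i + 1)))
    -- conditional density of a midpoint given two surrounding points (Markov bridge formula)
    (hcond : ∀ s1 s2 s3 u v w, cond s1 s2 s3 u v w =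
      tr s1 s2 u v * tr s2 s3 v w / tr s1 s3 u w)
    (x : ℕ → E) :
    p x = p1 (x 1) * tr (t 1) (t (2 ^ k + 1)) (x 1) (x (2 ^ k + 1)) *
      ∏ i ∈ Icc 2 (2 ^ k),
        cond (t (i - dyadicGap i)) (t i) (t (i + dyadicGap i))
          (x (i - dyadicGap i)) (x i) (x (i + dyadicGap i)) := by
  rw [hMarkov x]
  simp_rw [hcond]
  rw [mul_assoc, key tr hpos k t x]
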